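/- Let H be a finite-dimensional Hilbert space and W ⊆ B(H), W̃ ⊆ B(H)* linear subspaces. Then S^CP, the set of completely positive maps F : B(H) → B(H) with F(W) ⊆ W and F*(W̃) ⊆ W̃, is a pointed SDR cone in B(H) ⊗ B(H)*: there is a linear subspace 𝒲 ⊆ B(H ⊗ H) such that S^CP = χ(𝒲 ∩ S⁺), where χ is the Choi–Jamiołkowski isomorphism from B(H ⊗ H) to maps on B(H). Moreover, every F ∈ S^CP, viewed as an element of B(H) ⊗ B(H)*, lies in the subspace S = W ⊗ (W^⊥ + W̃) + (W ∩ W̃^⊥) ⊗ B(H)* + B(H) ⊗ W^⊥. -/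

import Mathlib

open Matrix
open scoped ComplexOrder

/-- `Mat n` is `B(H)` for `H = ℂⁿ`: the `n × n` complex matrices. -/
abbrev Mat (n : ℕ) := Matrix (Fin n) (Fin n) ℂ

/-- The ampliation `Φ ⊗ id_k` of a linear map `Φ` on `B(ℂⁿ)`, acting block-wise on
`B(ℂⁿ ⊗ ℂᵏ)`. -/
noncomputable def amplL {n : ℕ} (Φ : Mat n →ₗ[ℂ] Mat n) (k : ℕ) :
    Matrix (Fin n × Fin k) (Fin n × Fin k) ℂ →ₗ[ℂ]
      Matrix (Fin n × Fin k) (Fin n × Fin k) ℂ where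
  toFun X := Matrix.of fun p q =>
    Φ (Matrix.of fun i j => X (i, p.2) (j, q.2)) p.1 q.1
  map_add' X Y := by
    ext p q
    have h : (Matrix.of fun i j => X (i, p.2) (j, q.2) + Y (i, p.2) (j, q.2))
        = (Matrix.of fun i j => X (i, p.2) (j, q.2))
          + (Matrix.of fun i j => Y (i, p.2) (j, q.2)) := by
      ext i j
      simp
    simp only [Matrix.of_apply, Matrix.add_apply]
    rw [h, map_add, Matrix.add_apply]
  map_smul' c X := by
    ext p q
    have h : (Matrix.of fun i j => c • X (i, p.2) (j, q.2))
        = c • (Matrix.of fun i j => X (i, p.2) (j, q.2)) := by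
      ext i j
      simp
    simp only [Matrix.of_apply, Matrix.smul_apply, RingHom.id_apply]
    rw [h, _root_.map_smul, Matrix.smul_apply]

/-- A linear map on `B(ℂⁿ)` is completely positive if all its ampliations
`Φ ⊗ id_k` preserve positive semidefiniteness. -/
def IsCP {n : ℕ} (Φ : Mat n →ₗ[ℂ] Mat n) : Prop :=
  ∀ (k : ℕ) (X : Matrix (Fin n × Fin k) (Fin n × Fin k) ℂ),
    X.PosSemidef → (amplL Φ k X).PosSemidef


/-- The Choi matrix of a linear map `Φ` on `B(ℂⁿ)`:
`C_{(i,j),(k,l)} = Φ(E_{ik})_{jl}`; by Choi's theorem, `Φ` is completely positive iff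
its Choi matrix is positive semidefinite.  Its inverse is the Choi–Jamiołkowski
isomorphism `χ`. -/
noncomputable def choi {n : ℕ} (Φ : Mat n →ₗ[ℂ] Mat n) :
    Matrix (Fin n × Fin n) (Fin n × Fin n) ℂ :=
  Matrix.of fun p q => Φ (Matrix.single p.1 q.1 (1 : ℂ)) p.2 q.2

/-- The set `S^CP` of completely positive maps `F` on `B(H)` such that `F(W) ⊆ W`
and `F*(W̃) ⊆ W̃`. -/
def SCP {n : ℕ} (W : Submodule ℂ (Mat n))
    (Wt : Submodule ℂ (Module.Dual ℂ (Mat n))) : Set (Mat n →ₗ[ℂ] Mat n) :=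
  {F | IsCP F ∧ (∀ X ∈ W, F X ∈ W) ∧ (∀ σ ∈ Wt, σ ∘ₗ F ∈ Wt)}

/-- The subspace of maps corresponding to the algebraic tensor product `A ⊗ B` of a
subspace `A ⊆ B(H)` and a subspace `B ⊆ B(H)*`, under the identification of
`B(H) ⊗ B(H)*` with linear maps on `B(H)` (the simple tensor `a ⊗ σ` is the map
`X ↦ σ(X) a`). -/
noncomputable def mapTensor {n : ℕ} (A : Submodule ℂ (Mat n))
    (B : Submodule ℂ (Module.Dual ℂ (Mat n))) : Submodule ℂ (Mat n →ₗ[ℂ] Mat n) :=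
  Submodule.span ℂ {F | ∃ a ∈ A, ∃ σ ∈ B, F = σ.smulRight a}

section Aux
variable {n : ℕ}

lemma choi_apply (F : Mat n →ₗ[ℂ] Mat n) (i j k l : Fin n) :
    choi F (i, j) (k, l) = F (Matrix.single i k 1) j l := rfl

lemma map_eq_sum (F : Mat n →ₗ[ℂ] Mat n) (X : Mat n) :
    F X = ∑ i, ∑ k, X i k • F (Matrix.single i k 1) := by
  conv_lhs => rw [matrix_eq_sum_single X]
  rw [map_sum]
  refine Finset.sum_congr rfl fun i _ => ?_
  rw [map_sum]
  refine Finset.sum_congr rfl fun k _ => ?_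
  have h : Matrix.single i k (X i k) = X i k • Matrix.single i k (1 : ℂ) := by
    rw [Matrix.smul_single, smul_eq_mul, mul_one]
  rw [h, _root_.map_smul]

lemma eq_zero_of_choi_eq_zero {F : Mat n →ₗ[ℂ] Mat n} (h : choi F = 0) : F = 0 := by
  apply LinearMap.ext; intro X
  rw [map_eq_sum]
  simp only [LinearMap.zero_apply]
  refine Finset.sum_eq_zero fun i _ => Finset.sum_eq_zero fun k _ => ?_
  have hz : F (Matrix.single i k 1) = 0 := by
    ext j l
    have := Matrix.ext_iff.mpr h (i, j) (k, l)
    simpa [choi] using this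
  rw [hz, smul_zero]

/-- `choi` as a linear map. -/
noncomputable def choiL : (Mat n →ₗ[ℂ] Mat n) →ₗ[ℂ]
    Matrix (Fin n × Fin n) (Fin n × Fin n) ℂ where
  toFun := choi
  map_add' F G := by ext p q; simp [choi]
  map_smul' c F := by ext p q; simp [choi]

/-- The submodule of maps preserving `W` and whose adjoint preserves `Wt`. -/
noncomputable def invSub (W : Submodule ℂ (Mat n)) (Wt : Submodule ℂ (Module.Dual ℂ (Mat n))) :
    Submodule ℂ (Mat n →ₗ[ℂ] Mat n) where
  carrier := {F | (∀ X ∈ W, F X ∈ W) ∧ ∀ σ ∈ Wt, σ ∘ₗ F ∈ Wt}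
  add_mem' := by
    rintro F G ⟨hF1, hF2⟩ ⟨hG1, hG2⟩
    refine ⟨fun X hX => ?_, fun σ hσ => ?_⟩
    · simpa using add_mem (hF1 X hX) (hG1 X hX)
    · have h : σ ∘ₗ (F + G) = σ ∘ₗ F + σ ∘ₗ G := by ext x; simp
      rw [h]; exact add_mem (hF2 σ hσ) (hG2 σ hσ)
  zero_mem' := by
    refine ⟨fun X _ => by simpa using W.zero_mem, fun σ hσ => ?_⟩
    have h : σ ∘ₗ (0 : Mat n →ₗ[ℂ] Mat n) = 0 := by ext x; simp
    rw [h]; exact Wt.zero_mem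
  smul_mem' := by
    rintro c F ⟨h1, h2⟩
    refine ⟨fun X hX => by simpa using W.smul_mem c (h1 X hX), fun σ hσ => ?_⟩
    have h : σ ∘ₗ (c • F) = c • (σ ∘ₗ F) := by ext x; simp
    rw [h]; exact Wt.smul_mem c (h2 σ hσ)

end Aux
section Fwd
variable {n : ℕ}

lemma choi_posSemidef_of_isCP {F : Mat n →ₗ[ℂ] Mat n} (h : IsCP F) :
    (choi F).PosSemidef := by
  classical
  set v : Fin n × Fin n → ℂ := fun p => if p.1 = p.2 then 1 else 0 with hv
  set E : Matrix (Fin n × Fin n) (Fin n × Fin n) ℂ := Matrix.vecMulVec v (star v) with hEdef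
  have hE : E.PosSemidef := by
    have h1 : E = Matrix.replicateCol (Fin 1) v * (Matrix.replicateCol (Fin 1) v)ᴴ := by
      rw [Matrix.conjTranspose_replicateCol]; exact Matrix.vecMulVec_eq (Fin 1) v (star v)
    rw [h1]
    exact Matrix.posSemidef_self_mul_conjTranspose _
  have hswap : amplL F n E = (choi F).submatrix Prod.swap Prod.swap := by
    ext p q
    have hstd : (Matrix.of fun i j => E (i, p.2) (j, q.2))
        = Matrix.single p.2 q.2 (1 : ℂ) := by
      ext i j
      simp only [Matrix.of_apply, hEdef, Matrix.vecMulVec_apply, hv, Pi.star_apply,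
        Matrix.single, apply_ite (star : ℂ → ℂ), star_one, star_zero]
      by_cases h1 : i = p.2 <;> by_cases h2 : j = q.2 <;>
        simp [h1, h2, eq_comm]
    show F (Matrix.of fun i j => E (i, p.2) (j, q.2)) p.1 q.1 = _
    rw [hstd]
    rfl
  have hpsd := h n E hE
  rw [hswap] at hpsd
  have := hpsd.submatrix Prod.swap
  have heq : ((choi F).submatrix Prod.swap Prod.swap).submatrix Prod.swap Prod.swap
      = choi F := by
    ext p q; simp
  rwa [heq] at this

end Fwd
section Bwd
open Kronecker
variable {n : ℕ}

lemma isCP_of_choi_posSemidef {F : Mat n →ₗ[ℂ] Mat n} (h : (choi F).PosSemidef) :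
    IsCP F := by
  classical
  obtain ⟨B, hB⟩ : ∃ B : Matrix (Fin n × Fin n) (Fin n × Fin n) ℂ, choi F = Bᴴ * B := by
    open scoped MatrixOrder in exact CStarAlgebra.nonneg_iff_eq_star_mul_self.mp h.nonneg
  set K : (Fin n × Fin n) → Mat n := fun m => Matrix.of fun j i => star (B m (i, j)) with hKdef
  have hKraus : ∀ X : Mat n, F X = ∑ m, K m * X * (K m)ᴴ := by
    intro X
    ext j l
    rw [map_eq_sum]
    simp only [Matrix.sum_apply, Matrix.smul_apply, smul_eq_mul]
    have hent : ∀ i k : Fin n, F (Matrix.single i k 1) j l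
        = ∑ m, star (B m (i, j)) * B m (k, l) := by
      intro i k
      have h1 : F (Matrix.single i k 1) j l = choi F (i, j) (k, l) := rfl
      rw [h1, hB, Matrix.mul_apply]
      simp [Matrix.conjTranspose_apply]
    have hR : ∀ m, (K m * X * (K m)ᴴ) j l
        = ∑ i, ∑ k, star (B m (i, j)) * X i k * B m (k, l) := by
      intro m
      rw [Matrix.mul_apply]
      simp only [Matrix.mul_apply, Matrix.conjTranspose_apply, hKdef, Matrix.of_apply,
        star_star, Finset.sum_mul]
      exact Finset.sum_comm
    simp only [hent, hR, Finset.mul_sum]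
    have step : ∀ (i k : Fin n) (m : Fin n × Fin n),
        X i k * (star (B m (i, j)) * B m (k, l)) = star (B m (i, j)) * X i k * B m (k, l) :=
      fun i k m => by ring
    simp only [step]
    exact (Finset.sum_congr rfl fun i _ => Finset.sum_comm).trans Finset.sum_comm
  intro k X hX
  have hampl : amplL F k X
      = ∑ m, (K m ⊗ₖ (1 : Matrix (Fin k) (Fin k) ℂ)) * X
          * ((K m ⊗ₖ (1 : Matrix (Fin k) (Fin k) ℂ))ᴴ) := by
    ext p q
    show F (Matrix.of fun i j => X (i, p.2) (j, q.2)) p.1 q.1 = _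
    rw [hKraus]
    simp only [Matrix.sum_apply]
    refine Finset.sum_congr rfl fun m _ => ?_
    have hKb : ∀ (u r : Fin n × Fin k),
        (K m ⊗ₖ (1 : Matrix (Fin k) (Fin k) ℂ)) u r
          = if u.2 = r.2 then K m u.1 r.1 else 0 := by
      intro u r
      simp [Matrix.kroneckerMap_apply, Matrix.one_apply, mul_ite, mul_one, mul_zero]
    have hL : (K m * (Matrix.of fun i j => X (i, p.2) (j, q.2)) * (K m)ᴴ) p.1 q.1
        = ∑ b, (∑ a, K m p.1 a * X (a, p.2) (b, q.2)) * star (K m q.1 b) := by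
      rw [Matrix.mul_apply]
      refine Finset.sum_congr rfl fun b _ => ?_
      rw [Matrix.mul_apply, Matrix.conjTranspose_apply]
      simp only [Matrix.of_apply]
    have hR : ((K m ⊗ₖ (1 : Matrix (Fin k) (Fin k) ℂ)) * X
          * ((K m ⊗ₖ (1 : Matrix (Fin k) (Fin k) ℂ))ᴴ)) p q
        = ∑ b, (∑ a, K m p.1 a * X (a, p.2) (b, q.2)) * star (K m q.1 b) := by
      rw [Matrix.mul_apply]
      have h1 : ∀ s : Fin n × Fin k, ((K m ⊗ₖ (1 : Matrix (Fin k) (Fin k) ℂ)) * X) p s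
          = ∑ a, K m p.1 a * X (a, p.2) s := by
        intro s
        rw [Matrix.mul_apply, Fintype.sum_prod_type]
        simp only [hKb, ite_mul, zero_mul]
        refine Finset.sum_congr rfl fun a _ => ?_
        simp
      simp only [h1, Matrix.conjTranspose_apply, hKb]
      rw [Fintype.sum_prod_type]
      simp only [apply_ite (star : ℂ → ℂ), star_zero, mul_ite, mul_zero]
      refine (Finset.sum_congr rfl fun b _ => ?_)
      simp
    rw [hL, hR]
  rw [hampl]
  exact Finset.sum_induction _ _ (fun a b ha hb => ha.add hb) Matrix.PosSemidef.zero
    fun m _ => hX.mul_mul_conjTranspose_same _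

end Bwd
section Tensor
variable {n : ℕ}

lemma mem_mapTensor_of (A : Submodule ℂ (Mat n)) (B : Submodule ℂ (Module.Dual ℂ (Mat n)))
    (G : Mat n →ₗ[ℂ] Mat n) (hr : ∀ x, G x ∈ A)
    (hk : ∀ x ∈ B.dualCoannihilator, G x = 0) : G ∈ mapTensor A B := by
  classical
  set Bp := B.dualCoannihilator with hBp
  obtain ⟨U, hU⟩ := Submodule.exists_isCompl Bp
  set π : Mat n →ₗ[ℂ] U := U.projectionOnto Bp hU.symm with hπ
  let bU := Module.finBasis ℂ U
  have hGx : ∀ x : Mat n, G x = G ((π x : U) : Mat n) := by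
    intro x
    have hdec := Submodule.projection_add_projection_eq_self hU x
    have h0 : G ((Bp.projectionOnto U hU x : Bp) : Mat n) = 0 :=
      hk _ (SetLike.coe_mem _)
    calc G x = G (((Bp.projectionOnto U hU x : Bp) : Mat n)
          + ((U.projectionOnto Bp hU.symm x : U) : Mat n)) := by exact congrArg G hdec.symm
    _ = G ((π x : U) : Mat n) := by rw [map_add, h0, zero_add]
  have hG : G = ∑ j, ((bU.coord j) ∘ₗ π).smulRight (G ((bU j : U) : Mat n)) := by
    apply LinearMap.ext; intro x
    rw [LinearMap.sum_apply]
    simp only [LinearMap.smulRight_apply, LinearMap.comp_apply]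
    have h1 : ∀ j, bU.coord j (π x) • G ((bU j : U) : Mat n)
        = G ((((bU.coord j (π x)) • bU j : U) : Mat n)) := by
      intro j
      rw [← map_smul G]
      norm_cast
    simp only [h1]
    rw [← map_sum]
    have h2 : (∑ j, ((bU.coord j (π x) • bU j : U) : Mat n))
        = ((π x : U) : Mat n) := by
      norm_cast
      simp only [Module.Basis.coord_apply]
      exact bU.sum_repr (π x)
    rw [h2, ← hGx]
  rw [hG]
  refine Submodule.sum_mem _ fun j _ => Submodule.subset_span ?_
  refine ⟨G ((bU j : U) : Mat n), hr _, (bU.coord j) ∘ₗ π, ?_, rfl⟩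
  have hBeq : Bp.dualAnnihilator = B := Subspace.dualCoannihilator_dualAnnihilator_eq
  rw [← hBeq, Submodule.mem_dualAnnihilator]
  intro w hw
  have : π w = 0 := Submodule.projectionOnto_apply_of_mem_right hU.symm hw
  simp [this]

end Tensor
/-- for subspaces `W ⊆ B(H)` and `W̃ ⊆ B(H)*`, the set `S^CP` of
completely positive maps `F` with `F(W) ⊆ W` and `F*(W̃) ⊆ W̃` is a pointed SDR cone
in `B(H) ⊗ B(H)*`: there is a subspace `𝒲 ⊆ B(H ⊗ H)` with
`S^CP = χ(𝒲 ∩ S⁺)` (via the Choi–Jamiołkowski isomorphism).  Moreover every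
`F ∈ S^CP` lies in the subspace
`S = W ⊗ (W^⊥ + W̃) + (W ∩ W̃^⊥) ⊗ B(H)* + B(H) ⊗ W^⊥`. -/
theorem SCP_is_pointed_SDR_mapping_cone
    {n : ℕ} (W : Submodule ℂ (Mat n))
    (Wt : Submodule ℂ (Module.Dual ℂ (Mat n))) :
    -- S^CP is pointed
    (∀ F : Mat n →ₗ[ℂ] Mat n, F ∈ SCP W Wt → -F ∈ SCP W Wt → F = 0) ∧
    -- S^CP is semidefinite representable, via the Choi–Jamiołkowski isomorphism
    (∃ 𝒲 : Submodule ℂ (Matrix (Fin n × Fin n) (Fin n × Fin n) ℂ),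
      ∀ F : Mat n →ₗ[ℂ] Mat n,
        F ∈ SCP W Wt ↔ (choi F ∈ 𝒲 ∧ (choi F).PosSemidef)) ∧
    -- every F ∈ S^CP lies in the subspace S
    (∀ F ∈ SCP W Wt,
      F ∈ mapTensor W (W.dualAnnihilator ⊔ Wt) ⊔
            mapTensor (W ⊓ Wt.dualCoannihilator) ⊤ ⊔
            mapTensor ⊤ W.dualAnnihilator) := by
  refine ⟨?_, ?_, ?_⟩
  · -- pointedness
    intro F hF hnF
    have h1 := choi_posSemidef_of_isCP hF.1
    have h2 := choi_posSemidef_of_isCP hnF.1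
    have hneg : choi (-F) = -choi F := by
      ext p q; simp [choi]
    rw [hneg] at h2
    apply eq_zero_of_choi_eq_zero
    have hv : ∀ x, choi F *ᵥ x = 0 := by
      intro x
      refine ((h1.dotProduct_mulVec_zero_iff x).mp ?_)
      have ha := h1.dotProduct_mulVec_nonneg x
      have hb := h2.dotProduct_mulVec_nonneg x
      rw [Matrix.neg_mulVec, dotProduct_neg] at hb
      exact le_antisymm (neg_nonneg.mp hb) ha
    ext p q
    have := congrFun (hv (Pi.single q 1)) p
    simpa [Matrix.mulVec_single] using this
  · -- SDR
    refine ⟨(invSub W Wt).map choiL, fun F => ?_⟩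
    constructor
    · rintro ⟨hcp, h1, h2⟩
      exact ⟨⟨F, ⟨h1, h2⟩, rfl⟩, choi_posSemidef_of_isCP hcp⟩
    · rintro ⟨⟨G, hG, hGF⟩, hpsd⟩
      have hFG : G = F := by
        have hc : choi G = choi F := hGF
        have hz : choi (G - F) = 0 := by
          have := map_sub choiL G F
          have hL : choiL (G - F) = choi (G - F) := rfl
          rw [hL] at this
          rw [this]
          show choi G - choi F = 0
          rw [hc, sub_self]
        exact sub_eq_zero.mp (eq_zero_of_choi_eq_zero hz)
      exact ⟨isCP_of_choi_posSemidef hpsd, hFG ▸ hG.1, hFG ▸ hG.2⟩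
  · -- subspace S
    intro F hF
    obtain ⟨hcp, hFW, hFWt⟩ := hF
    classical
    set E : Submodule ℂ (Mat n) := W ⊓ Wt.dualCoannihilator with hEdef
    obtain ⟨U, hU⟩ := Submodule.exists_isCompl W
    obtain ⟨E', hE'⟩ := Submodule.exists_isCompl E
    set prW : Mat n →ₗ[ℂ] Mat n := W.subtype ∘ₗ W.projectionOnto U hU with hprW
    set prU : Mat n →ₗ[ℂ] Mat n := U.subtype ∘ₗ U.projectionOnto W hU.symm with hprU
    set prE : Mat n →ₗ[ℂ] Mat n := E.subtype ∘ₗ E.projectionOnto E' hE' with hprE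
    have hFxE : ∀ x ∈ E, F x ∈ E := by
      intro x hx
      have hx' := Submodule.mem_inf.mp hx
      refine Submodule.mem_inf.mpr ⟨hFW x hx'.1, (Submodule.mem_dualCoannihilator _).mpr
        fun σ hσ => ?_⟩
      exact (Submodule.mem_dualCoannihilator x).mp hx'.2 _ (hFWt σ hσ)
    set F3 : Mat n →ₗ[ℂ] Mat n := F ∘ₗ prU with hF3
    set F2 : Mat n →ₗ[ℂ] Mat n := prE ∘ₗ (F ∘ₗ prW) with hF2
    set F1 : Mat n →ₗ[ℂ] Mat n := F ∘ₗ prW - F2 with hF1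
    have hsum : F1 + F2 + F3 = F := by
      apply LinearMap.ext; intro x
      simp only [LinearMap.add_apply, LinearMap.sub_apply, hF1, hF3]
      have hdec := Submodule.projection_add_projection_eq_self hU x
      have : prW x + prU x = x := hdec
      calc (F ∘ₗ prW) x - F2 x + F2 x + (F ∘ₗ prU) x
          = F (prW x) + F (prU x) := by
            simp [LinearMap.comp_apply]
      _ = F (prW x + prU x) := (map_add F _ _).symm
      _ = F x := by rw [this]
    have m1 : F1 ∈ mapTensor W (W.dualAnnihilator ⊔ Wt) := by
      refine mem_mapTensor_of _ _ _ (fun x => ?_) (fun x hx => ?_)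
      · have h1 : F (prW x) ∈ W := hFW _ (SetLike.coe_mem _)
        have h2 : F2 x ∈ W := by
          have : F2 x = ((E.projectionOnto E' hE' ((F ∘ₗ prW) x) : E) : Mat n) := rfl
          rw [this]
          exact (Submodule.mem_inf.mp (SetLike.coe_mem _)).1
        exact Submodule.sub_mem _ h1 h2
      · have hxE : x ∈ E := by
          rw [Submodule.dualCoannihilator_sup_eq] at hx
          rw [hEdef]
          rwa [Subspace.dualAnnihilator_dualCoannihilator_eq] at hx
        have hxW : x ∈ W := (Submodule.mem_inf.mp hxE).1
        have hprWx : prW x = x := by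
          have : W.projectionOnto U hU x = ⟨x, hxW⟩ := by
            have := Submodule.projectionOnto_apply_left hU ⟨x, hxW⟩
            simpa using this
          simp [hprW, LinearMap.comp_apply, this]
        have hFxinE : F x ∈ E := hFxE x hxE
        have hprEEx : prE (F x) = F x := by
          have : E.projectionOnto E' hE' (F x) = ⟨F x, hFxinE⟩ := by
            have := Submodule.projectionOnto_apply_left hE' ⟨F x, hFxinE⟩
            simpa using this
          simp [hprE, LinearMap.comp_apply, this]
        simp [hF1, hF2, LinearMap.comp_apply, hprWx, hprEEx]
    have m2 : F2 ∈ mapTensor (W ⊓ Wt.dualCoannihilator) ⊤ := by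
      refine mem_mapTensor_of _ _ _ (fun x => ?_) (fun x hx => ?_)
      · have : F2 x = ((E.projectionOnto E' hE' ((F ∘ₗ prW) x) : E) : Mat n) := rfl
        rw [this, ← hEdef]
        exact SetLike.coe_mem _
      · have hx0 : x = 0 := by
          rw [← Module.forall_dual_apply_eq_zero_iff ℂ]
          intro φ
          exact (Submodule.mem_dualCoannihilator x).mp hx φ Submodule.mem_top
        rw [hx0, map_zero]
    have m3 : F3 ∈ mapTensor ⊤ W.dualAnnihilator := by
      refine mem_mapTensor_of _ _ _ (fun x => Submodule.mem_top) (fun x hx => ?_)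
      have hxW : x ∈ W := by
        rwa [Subspace.dualAnnihilator_dualCoannihilator_eq] at hx
      have : U.projectionOnto W hU.symm x = 0 :=
        Submodule.projectionOnto_apply_of_mem_right hU.symm hxW
      simp [hF3, hprU, LinearMap.comp_apply, this]
    rw [← hsum]
    exact Submodule.add_mem _
      (Submodule.add_mem _ (Submodule.mem_sup_left (Submodule.mem_sup_left m1))
        (Submodule.mem_sup_left (Submodule.mem_sup_right m2)))
      (Submodule.mem_sup_right m3)
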